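/- Let A be a unital C*-algebra with a Cuntz family ψ_1, …, ψ_d (d ≥ 1) and canonical endomorphism σ(t) := Σ_{k=1}^d ψ_k t ψ_k*, and let S := Σ_{p ∈ S_d} sign(p) ψ_{p(1)} ⋯ ψ_{p(d)}. Then S* σ(S) = (−1)^{d−1} (d−1)! · 1. (Equivalently, the totally antisymmetric isometry R := (d!)^{-1/2} S satisfies the special conjugate equation R* σ(R) = (−1)^{d−1} d^{−1} · 1.) -/

import Mathlib

lemma cuntz_contract2 {A : Type*} [Ring A] [StarRing A] {d : ℕ} (ψ : Fin d → A)
    (horth : ∀ i j, star (ψ i) * ψ j = if i = j then 1 else 0) :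
    ∀ (l₁ l₂ : List (Fin d)) (b : Fin d), l₁.length = l₂.length →
      star ((l₁.map ψ).prod) * (((l₂ ++ [b]).map ψ).prod)
        = if l₁ = l₂ then ψ b else 0 := by
  intro l₁
  induction l₁ with
  | nil =>
    intro l₂ b h
    obtain rfl : l₂ = [] := List.length_eq_zero_iff.mp h.symm
    simp
  | cons a l₁ ih =>
    intro l₂ b h
    cases l₂ with
    | nil => simp at h
    | cons c l₂ =>
      simp only [List.map_cons, List.prod_cons, star_mul, List.cons_append]
      rw [mul_assoc, ← mul_assoc (star (ψ a)), horth]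
      by_cases hac : a = c
      · subst hac
        simp only [if_pos trivial, one_mul]
        rw [ih l₂ b (by simpa using h)]
        by_cases h2 : l₁ = l₂ <;> simp [h2]
      · simp [hac]

lemma cuntz_key {A : Type*} [Ring A] [StarRing A] {n : ℕ} (ψ : Fin (n + 1) → A)
    (horth : ∀ i j, star (ψ i) * ψ j = if i = j then 1 else 0)
    (q p : Equiv.Perm (Fin (n + 1))) (k : Fin (n + 1)) :
    star ((List.ofFn fun i => ψ (q i)).prod) * (ψ k * (List.ofFn fun i => ψ (p i)).prod)
      = if ⇑q = Fin.cons k (fun i => p i.castSucc) then ψ (p (Fin.last n)) else 0 := by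
  have e1 : ∀ (f : Fin (n + 1) → Fin (n + 1)),
      (List.ofFn fun i => ψ (f i)) = (List.ofFn f).map ψ :=
    fun f => by rw [List.map_ofFn]; rfl
  rw [e1 ⇑q, e1 ⇑p, List.ofFn_succ' ⇑p, List.concat_eq_append]
  have e2 : ψ k * (((List.ofFn fun i : Fin n => p i.castSucc) ++ [p (Fin.last n)]).map ψ).prod
      = ((((k :: List.ofFn fun i : Fin n => p i.castSucc)) ++ [p (Fin.last n)]).map ψ).prod := by
    simp
  rw [e2, cuntz_contract2 ψ horth _ _ _ (by simp)]
  have e3 : (k :: List.ofFn fun i : Fin n => p i.castSucc)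
      = List.ofFn (Fin.cons k (fun i => p i.castSucc)) := by
    rw [List.ofFn_succ]
    simp
  rw [e3]
  exact if_congr List.ofFn_inj rfl rfl

theorem antisymmetric_special_conjugate
    {A : Type*} [NormedRing A] [StarRing A] [CStarRing A]
    [NormedAlgebra ℂ A] [StarModule ℂ A] [CompleteSpace A]
    {d : ℕ} (hd : 0 < d) (ψ : Fin d → A)
    (horth : ∀ i j, star (ψ i) * ψ j = if i = j then 1 else 0)
    (hsum : ∑ k, ψ k * star (ψ k) = 1) :
    star (∑ p : Equiv.Perm (Fin d), (Equiv.Perm.sign p : ℤ) •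
          (List.ofFn fun i => ψ (p i)).prod)
        * (∑ k, ψ k * (∑ p : Equiv.Perm (Fin d), (Equiv.Perm.sign p : ℤ) •
            (List.ofFn fun i => ψ (p i)).prod) * star (ψ k))
      = (((-1 : ℤ) ^ (d - 1)) * (d - 1).factorial) • 1 := by
  obtain ⟨n, rfl⟩ : ∃ n, d = n + 1 := ⟨d - 1, (Nat.succ_pred_eq_of_pos hd).symm⟩
  simp only [Nat.add_sub_cancel]
  set c : ℤ := (-1 : ℤ) ^ n * n.factorial with hc
  set W : Equiv.Perm (Fin (n + 1)) → A := fun p => (List.ofFn fun i => ψ (p i)).prod with hW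
  set S : A := ∑ p : Equiv.Perm (Fin (n + 1)), (Equiv.Perm.sign p : ℤ) • W p with hS
  have key : ∀ k, star S * (ψ k * S) = c • ψ k := by
    intro k
    have expand : star S * (ψ k * S)
        = ∑ q : Equiv.Perm (Fin (n + 1)), ∑ p : Equiv.Perm (Fin (n + 1)),
            ((Equiv.Perm.sign q : ℤ) * (Equiv.Perm.sign p : ℤ)) •
              (star (W q) * (ψ k * W p)) := by
      rw [hS, star_sum, Finset.sum_mul]
      refine Finset.sum_congr rfl fun q _ => ?_
      rw [star_zsmul, Finset.mul_sum, Finset.mul_sum]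
      refine Finset.sum_congr rfl fun p _ => ?_
      rw [mul_smul_comm, mul_smul_comm, smul_mul_assoc, smul_smul, mul_comm]
    rw [expand]
    have inner : ∀ q : Equiv.Perm (Fin (n + 1)),
        (∑ p : Equiv.Perm (Fin (n + 1)),
            ((Equiv.Perm.sign q : ℤ) * (Equiv.Perm.sign p : ℤ)) •
              (star (W q) * (ψ k * W p)))
        = if q 0 = k then ((-1 : ℤ) ^ n) • ψ k else 0 := by
      intro q
      have hterm : ∀ p : Equiv.Perm (Fin (n + 1)),
          star (W q) * (ψ k * W p)
            = if ⇑q = Fin.cons k (fun i => p i.castSucc) then ψ (p (Fin.last n)) else 0 :=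
        fun p => cuntz_key ψ horth q p k
      by_cases hq : q 0 = k
      · rw [if_pos hq]
        rw [Finset.sum_eq_single (q * finRotate (n + 1))]
        · have hcnd : ⇑q = Fin.cons k (fun i => (q * finRotate (n + 1)) i.castSucc) := by
            funext i
            refine Fin.cases ?_ ?_ i
            · simp [hq]
            · intro j
              simp [Fin.cons_succ, Equiv.Perm.mul_apply, finRotate_succ_apply,
                Fin.coeSucc_eq_succ]
          rw [hterm, if_pos hcnd]
          have hlast : (q * finRotate (n + 1)) (Fin.last n) = k := by
            simp [Equiv.Perm.mul_apply, finRotate_succ_apply, Fin.last_add_one, hq]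
          rw [hlast]
          congr 1
          have hs : Equiv.Perm.sign q * Equiv.Perm.sign (q * finRotate (n + 1))
              = (-1) ^ n := by
            rw [map_mul, sign_finRotate, ← mul_assoc, Int.units_mul_self, one_mul, Nat.add_sub_cancel]
          calc (Equiv.Perm.sign q : ℤ) * (Equiv.Perm.sign (q * finRotate (n + 1)) : ℤ)
              = ((Equiv.Perm.sign q * Equiv.Perm.sign (q * finRotate (n + 1)) : ℤˣ) : ℤ) := by
                rw [Units.val_mul]
            _ = ((-1 : ℤ) ^ n) := by rw [hs]; simp
        · intro p _ hne
          rw [hterm, if_neg, smul_zero]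
          intro hcnd
          apply hne
          apply Equiv.ext
          intro i
          revert i
          show ∀ i, p i = (q * finRotate (n + 1)) i
          have hps : ∀ j : Fin n, p j.castSucc = q j.succ := by
            intro j
            have := congrFun hcnd j.succ
            simpa [Fin.cons_succ] using this.symm
          have hpl : p (Fin.last n) = k := by
            rcases Fin.eq_castSucc_or_eq_last (p.symm k) with ⟨j, hj⟩ | hj
            · exfalso
              have h1 : p (Fin.castSucc j) = k := by rw [← hj]; simp
              have h2 : q j.succ = q 0 := by rw [← hps j, h1, hq]
              exact (Fin.succ_ne_zero j) (q.injective h2)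
            · rw [← hj]; simp
          intro i
          refine Fin.lastCases ?_ ?_ i
          · rw [hpl]
            simp [Equiv.Perm.mul_apply, finRotate_succ_apply, Fin.last_add_one, hq]
          · intro j
            rw [hps j]
            simp [Equiv.Perm.mul_apply, finRotate_succ_apply, Fin.coeSucc_eq_succ]
        · intro h
          exact absurd (Finset.mem_univ _) h
      · rw [if_neg hq]
        refine Finset.sum_eq_zero fun p _ => ?_
        rw [hterm, if_neg, smul_zero]
        intro hcnd
        exact hq (by simpa using congrFun hcnd 0)
    rw [Finset.sum_congr rfl fun q _ => inner q]
    rw [← Equiv.sum_comp (Equiv.Perm.decomposeFin.symm)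
      (fun q => if q 0 = k then ((-1 : ℤ) ^ n) • ψ k else 0), Fintype.sum_prod_type]
    simp only [Equiv.Perm.decomposeFin_symm_apply_zero]
    rw [Finset.sum_comm]
    simp only [Finset.sum_ite_eq', Finset.mem_univ, if_pos]
    rw [Finset.sum_const, Finset.card_univ, Fintype.card_perm, Fintype.card_fin]
    rw [← natCast_zsmul, smul_smul, hc, mul_comm]
  have step : ∀ k, star S * (ψ k * S * star (ψ k)) = c • (ψ k * star (ψ k)) := by
    intro k
    rw [← mul_assoc, ← mul_assoc, mul_assoc (star S), key k, smul_mul_assoc]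
  calc star S * (∑ k, ψ k * S * star (ψ k))
      = ∑ k, star S * (ψ k * S * star (ψ k)) := by rw [Finset.mul_sum]
    _ = ∑ k, c • (ψ k * star (ψ k)) := Finset.sum_congr rfl fun k _ => step k
    _ = c • ∑ k, ψ k * star (ψ k) := by rw [Finset.smul_sum]
    _ = c • 1 := by rw [hsum]
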